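/- Let f : ℝ^d → ℝ be differentiable, and suppose that for every x ∈ ℝ^d there is a random vector g(x) in ℝ^d with E[g(x)] = ∇f(x), with g(x) and ‖g(x)‖² integrable, such that for every coordinate v the probability that the v-th coordinate of g(x) is nonzero is at most Δ, where 0 < Δ ≤ 1. Suppose M ≥ 0 and σ² ≥ 0 satisfy E‖g(x) − ∇f(x)‖² ≤ M‖∇f(x)‖² + σ² for all x, and suppose the gradient norm is unbounded: sup_{x ∈ ℝ^d} ‖∇f(x)‖ = ∞. Then M ≥ (1 − Δ)/Δ. -/

import Mathlib

open MeasureTheory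

open MeasureTheory

lemma cs_support {α : Type*} [MeasurableSpace α] (μ : Measure α) [IsFiniteMeasure μ]
    (φ : α → ℝ) (hm : Measurable φ) (h1 : Integrable φ μ)
    (h2 : Integrable (fun ω => φ ω ^ 2) μ) :
    (∫ ω, φ ω ∂μ) ^ 2 ≤ (μ (Function.support φ)).toReal * ∫ ω, φ ω ^ 2 ∂μ := by
  set A := Function.support φ with hAdef
  have hA : MeasurableSet A := by
    have : A = φ ⁻¹' ({0}ᶜ) := by
      ext ω; simp [hAdef, Function.mem_support]
    rw [this]; exact hm (measurableSet_singleton 0).compl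
  set I := ∫ ω, φ ω ∂μ with hI
  set S := ∫ ω, φ ω ^ 2 ∂μ with hS
  set mA := (μ A).toReal with hmA
  have hSnn : 0 ≤ S := integral_nonneg fun ω => sq_nonneg _
  have hind : Integrable (A.indicator fun _ => (1 : ℝ)) μ := (integrable_const 1).indicator hA
  have key : ∀ t : ℝ, 0 ≤ S - 2 * t * I + t ^ 2 * mA := by
    intro t
    have h0 : 0 ≤ ∫ ω, A.indicator (fun ω => (φ ω - t) ^ 2) ω ∂μ :=
      integral_nonneg fun ω => Set.indicator_nonneg (fun _ _ => sq_nonneg _) ω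
    have heq : ∀ ω, A.indicator (fun ω => (φ ω - t) ^ 2) ω
        = φ ω ^ 2 - 2 * t * φ ω + t ^ 2 * A.indicator (fun _ => (1 : ℝ)) ω := by
      intro ω
      by_cases hω : ω ∈ A
      · simp only [Set.indicator_of_mem hω]; ring
      · have hφ0 : φ ω = 0 := Function.notMem_support.mp hω
        simp [Set.indicator_of_notMem hω, hφ0]
    rw [show (fun ω => A.indicator (fun ω => (φ ω - t) ^ 2) ω)
        = fun ω => φ ω ^ 2 - 2 * t * φ ω + t ^ 2 * A.indicator (fun _ => (1 : ℝ)) ω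
        from funext heq] at h0
    have hsubint : Integrable (fun ω => φ ω ^ 2 - 2 * t * φ ω) μ :=
      h2.sub (h1.const_mul (2 * t))
    rw [integral_add hsubint (hind.const_mul (t ^ 2)),
      integral_sub h2 (h1.const_mul (2 * t)), MeasureTheory.integral_const_mul, MeasureTheory.integral_const_mul,
      integral_indicator_const (1 : ℝ) hA] at h0
    simpa [hmA, mul_comm, Measure.real] using h0
  have hmAnn : 0 ≤ mA := ENNReal.toReal_nonneg
  rcases eq_or_lt_of_le hmAnn with hzero | hpos
  · have hI0 : I = 0 := by
      by_contra hI0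
      have hk := key ((S + 1) / (2 * I))
      have he : 2 * ((S + 1) / (2 * I)) * I = S + 1 := by field_simp
      rw [← hzero] at hk
      rw [he] at hk
      linarith
    rw [hI0, ← hzero]
    simp
  · have hk := key (I / mA)
    have hne : mA ≠ 0 := ne_of_gt hpos
    have e1 : 2 * (I / mA) * I = 2 * I ^ 2 / mA := by field_simp
    have e2 : (I / mA) ^ 2 * mA = I ^ 2 / mA := by field_simp
    have e3 : 2 * I ^ 2 / mA = 2 * (I ^ 2 / mA) := by ring
    rw [e1, e2, e3] at hk
    have : I ^ 2 / mA ≤ S := by linarith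
    calc I ^ 2 = (I ^ 2 / mA) * mA := by field_simp
    _ ≤ S * mA := mul_le_mul_of_nonneg_right this hmAnn
    _ = mA * S := mul_comm _ _

lemma cs_ae {α : Type*} [MeasurableSpace α] (μ : Measure α) [IsProbabilityMeasure μ]
    (φ : α → ℝ) (h1 : Integrable φ μ) (h2 : Integrable (fun ω => φ ω ^ 2) μ)
    (Δ : ℝ) (hΔ : 0 ≤ Δ) (hs : μ {ω | φ ω ≠ 0} ≤ ENNReal.ofReal Δ) :
    (∫ ω, φ ω ∂μ) ^ 2 ≤ Δ * ∫ ω, φ ω ^ 2 ∂μ := by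
  set φ' := h1.aestronglyMeasurable.mk φ with hφ'
  have hm : Measurable φ' := h1.aestronglyMeasurable.stronglyMeasurable_mk.measurable
  have hae : φ =ᵐ[μ] φ' := h1.aestronglyMeasurable.ae_eq_mk
  have h1' : Integrable φ' μ := h1.congr hae
  have h2' : Integrable (fun ω => φ' ω ^ 2) μ := h2.congr (hae.mono fun ω h => by simp [h])
  have hmeas_eq : μ (Function.support φ') = μ {ω | φ ω ≠ 0} := by
    apply measure_congr
    rw [Filter.eventuallyEq_set]
    filter_upwards [hae] with ω h
    simp [Function.mem_support, h]
  have hto : (μ (Function.support φ')).toReal ≤ Δ := by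
    rw [hmeas_eq]
    calc (μ {ω | φ ω ≠ 0}).toReal ≤ (ENNReal.ofReal Δ).toReal :=
      ENNReal.toReal_mono ENNReal.ofReal_ne_top hs
    _ = Δ := ENNReal.toReal_ofReal hΔ
  have hint_eq : ∫ ω, φ ω ∂μ = ∫ ω, φ' ω ∂μ := integral_congr_ae hae
  have hint2_eq : ∫ ω, φ ω ^ 2 ∂μ = ∫ ω, φ' ω ^ 2 ∂μ :=
    integral_congr_ae (hae.mono fun ω h => by simp [h])
  have hSnn : 0 ≤ ∫ ω, φ' ω ^ 2 ∂μ := integral_nonneg fun ω => sq_nonneg _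
  calc (∫ ω, φ ω ∂μ) ^ 2 = (∫ ω, φ' ω ∂μ) ^ 2 := by rw [hint_eq]
  _ ≤ (μ (Function.support φ')).toReal * ∫ ω, φ' ω ^ 2 ∂μ := cs_support μ φ' hm h1' h2'
  _ ≤ Δ * ∫ ω, φ' ω ^ 2 ∂μ := mul_le_mul_of_nonneg_right hto hSnn
  _ = Δ * ∫ ω, φ ω ^ 2 ∂μ := by rw [hint2_eq]


lemma euclid_norm_sq_eq {d : ℕ} (y : EuclideanSpace ℝ (Fin d)) :
    ‖y‖ ^ 2 = ∑ v, y v ^ 2 := by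
  rw [EuclideanSpace.norm_eq, Real.sq_sqrt (Finset.sum_nonneg fun i _ => sq_nonneg _)]
  simp [Real.norm_eq_abs, sq_abs]

lemma coord_sq_le {d : ℕ} (y : EuclideanSpace ℝ (Fin d)) (v : Fin d) :
    y v ^ 2 ≤ ‖y‖ ^ 2 := by
  rw [euclid_norm_sq_eq]
  exact Finset.single_le_sum (fun i _ => sq_nonneg (y i)) (Finset.mem_univ v)


/-- If a stochastic gradient oracle for `f` is `Δ`-sparse, satisfies the noise property
with parameters `(M, σ²)`, and the gradient norm of `f` is unbounded, then
`M ≥ (1 - Δ)/Δ`. -/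
theorem noise_param_lower_bound_of_sparse
    {d : ℕ} (f : EuclideanSpace ℝ (Fin d) → ℝ) (hf : Differentiable ℝ f)
    (Ω : EuclideanSpace ℝ (Fin d) → Type*) [∀ x, MeasurableSpace (Ω x)]
    (P : ∀ x, Measure (Ω x)) [∀ x, IsProbabilityMeasure (P x)]
    (g : ∀ x, Ω x → EuclideanSpace ℝ (Fin d))
    (hgint : ∀ x, Integrable (g x) (P x))
    (hg2int : ∀ x, Integrable (fun ω => ‖g x ω‖ ^ 2) (P x))
    (hunbiased : ∀ x, ∫ ω, g x ω ∂(P x) = gradient f x)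
    (Δ : ℝ) (hΔ0 : 0 < Δ) (hΔ1 : Δ ≤ 1)
    (hsparse : ∀ x (v : Fin d), P x {ω | g x ω v ≠ 0} ≤ ENNReal.ofReal Δ)
    (M σ2 : ℝ) (hM : 0 ≤ M) (hσ2 : 0 ≤ σ2)
    (hnoise : ∀ x, ∫ ω, ‖g x ω - gradient f x‖ ^ 2 ∂(P x) ≤ M * ‖gradient f x‖ ^ 2 + σ2)
    (hunbdd : ∀ c : ℝ, ∃ x, c < ‖gradient f x‖) :
    (1 - Δ) / Δ ≤ M := by
  -- key pointwise inequality
  have key : ∀ x, ‖gradient f x‖ ^ 2 ≤ Δ * ((M + 1) * ‖gradient f x‖ ^ 2 + σ2) := by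
    intro x
    set m := gradient f x with hm
    -- coordinate integrability
    have h1v : ∀ v : Fin d, Integrable (fun ω => g x ω v) (P x) := fun v =>
      (EuclideanSpace.proj v (𝕜 := ℝ)).integrable_comp (hgint x)
    have h2v : ∀ v : Fin d, Integrable (fun ω => g x ω v ^ 2) (P x) := by
      intro v
      refine (hg2int x).mono ((h1v v).aestronglyMeasurable.mul (h1v v).aestronglyMeasurable
        |>.congr ?_) (Filter.Eventually.of_forall fun ω => ?_)
      · exact Filter.Eventually.of_forall fun ω => by simp [sq]
      · have := coord_sq_le (g x ω) v
        simp only [Real.norm_eq_abs, sq_abs]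
        calc |g x ω v ^ 2| = g x ω v ^ 2 := abs_of_nonneg (sq_nonneg _)
        _ ≤ ‖g x ω‖ ^ 2 := this
        _ ≤ |‖g x ω‖ ^ 2| := le_abs_self _
    -- coordinate means
    have hmean : ∀ v : Fin d, ∫ ω, g x ω v ∂(P x) = m v := by
      intro v
      have := (EuclideanSpace.proj v (𝕜 := ℝ)).integral_comp_comm (hgint x)
      simpa [hunbiased x] using this
    -- coordinate Cauchy-Schwarz
    have hcs : ∀ v : Fin d, m v ^ 2 ≤ Δ * ∫ ω, g x ω v ^ 2 ∂(P x) := by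
      intro v
      have := cs_ae (P x) (fun ω => g x ω v) (h1v v) (h2v v) Δ hΔ0.le (hsparse x v)
      rwa [hmean v] at this
    -- sum over coordinates
    have hsum : ‖m‖ ^ 2 ≤ Δ * ∫ ω, ‖g x ω‖ ^ 2 ∂(P x) := by
      have e1 : ∫ ω, ‖g x ω‖ ^ 2 ∂(P x) = ∑ v, ∫ ω, g x ω v ^ 2 ∂(P x) := by
        rw [show (fun ω => ‖g x ω‖ ^ 2) = fun ω => ∑ v, g x ω v ^ 2 from
          funext fun ω => euclid_norm_sq_eq (g x ω)]
        exact integral_finset_sum _ fun v _ => h2v v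
      calc ‖m‖ ^ 2 = ∑ v, m v ^ 2 := euclid_norm_sq_eq m
      _ ≤ ∑ v, Δ * ∫ ω, g x ω v ^ 2 ∂(P x) := Finset.sum_le_sum fun v _ => hcs v
      _ = Δ * ∑ v, ∫ ω, g x ω v ^ 2 ∂(P x) := by rw [Finset.mul_sum]
      _ = Δ * ∫ ω, ‖g x ω‖ ^ 2 ∂(P x) := by rw [e1]
    -- second moment decomposition
    have hinner : Integrable (fun ω => (inner ℝ m (g x ω) : ℝ)) (P x) :=
      (hgint x).const_inner m
    have hint_inner : ∫ ω, (inner ℝ m (g x ω) : ℝ) ∂(P x) = ‖m‖ ^ 2 := by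
      rw [integral_inner (hgint x) m, hunbiased x, ← hm, real_inner_self_eq_norm_sq]
    have hdecomp : ∫ ω, ‖g x ω - m‖ ^ 2 ∂(P x)
        = (∫ ω, ‖g x ω‖ ^ 2 ∂(P x)) - ‖m‖ ^ 2 := by
      have hieq : ∀ ω, ‖g x ω - m‖ ^ 2
          = ‖g x ω‖ ^ 2 - 2 * (inner ℝ m (g x ω) : ℝ) + ‖m‖ ^ 2 := fun ω => by
        rw [norm_sub_sq_real, real_inner_comm]
      rw [show (fun ω => ‖g x ω - m‖ ^ 2)
          = fun ω => ‖g x ω‖ ^ 2 - 2 * (inner ℝ m (g x ω) : ℝ) + ‖m‖ ^ 2 from funext hieq]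
      have hsubint : Integrable (fun ω => ‖g x ω‖ ^ 2 - 2 * (inner ℝ m (g x ω) : ℝ)) (P x) :=
        (hg2int x).sub (hinner.const_mul 2)
      rw [integral_add hsubint (integrable_const _),
        integral_sub (hg2int x) (hinner.const_mul 2), MeasureTheory.integral_const_mul,
        hint_inner, integral_const]
      simp
      ring
    have hN := hnoise x
    rw [← hm] at hN
    rw [hdecomp] at hN
    calc ‖m‖ ^ 2 ≤ Δ * ∫ ω, ‖g x ω‖ ^ 2 ∂(P x) := hsum
    _ ≤ Δ * ((M + 1) * ‖m‖ ^ 2 + σ2) := by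
        apply mul_le_mul_of_nonneg_left _ hΔ0.le
        nlinarith [hN]
  -- conclude
  by_contra hcon
  push_neg at hcon
  have hε : 0 < 1 - Δ * (M + 1) := by
    have := (lt_div_iff₀ hΔ0).mp hcon
    nlinarith
  set c := Δ * σ2 / (1 - Δ * (M + 1)) with hc
  have hcnn : 0 ≤ c := by positivity
  obtain ⟨x, hx⟩ := hunbdd (Real.sqrt c)
  have hG2 : c < ‖gradient f x‖ ^ 2 := by
    have := pow_lt_pow_left₀ hx (Real.sqrt_nonneg c) (n := 2) (by norm_num)
    rwa [Real.sq_sqrt hcnn] at this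
  have hk := key x
  have h1 : (1 - Δ * (M + 1)) * ‖gradient f x‖ ^ 2 ≤ Δ * σ2 := by nlinarith
  have h2 : Δ * σ2 < (1 - Δ * (M + 1)) * ‖gradient f x‖ ^ 2 := by
    have := (div_lt_iff₀ hε).mp hG2
    linarith [this]
  linarith
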